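/- Let (F_n) be a nested Følner sequence in G with |F_{n+1}|/|F_n| → 1, and let A ⊆ G have lower density 0 and positive upper density along (F_n). Then there exists a subset A' ⊆ A such that A' has density 0 along (F_n) (i.e. lim_n |F_n ∩ A'|/|F_n| = 0), and limsup_n |F_n ∩ A'|/|F_n ∩ A| ≥ 2/3. -/

import Mathlib

open scoped Classical Pointwise
open Filter

/-- A Følner sequence of finite nonempty subsets of `G`. -/
def IsFolner {G : Type*} [Mul G] (F : ℕ → Finset G) : Prop :=
  (∀ n, (F n).Nonempty) ∧
  ∀ K : Finset G, ∀ ε : ℝ, 0 < ε →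
    ∀ᶠ n in atTop, ((symmDiff (K * F n) (F n)).card : ℝ) ≤ ε * ((F n).card : ℝ)

/-- For a nested Følner sequence with `|F_{n+1}|/|F_n| → 1` and a set `A`
of lower density `0` and positive upper density (with `|F_n ∩ A| → ∞`), there exists
`A' ⊆ A` of density `0` along `(F_n)` with `limsup |F_n ∩ A'|/|F_n ∩ A| ≥ 2/3`. -/
theorem stmt3 {G : Type*} [Semigroup G] [IsCancelMul G] [Countable G]
    (F : ℕ → Finset G) (hFol : IsFolner F)
    (hnested : ∀ n, F n ⊆ F (n + 1))
    (hratio : Tendsto (fun n => ((F (n + 1)).card : ℝ) / ((F n).card : ℝ)) atTop (nhds 1))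
    (A : Set G)
    (hcard : Tendsto (fun n => ((F n).filter (· ∈ A)).card) atTop atTop)
    (hlow : liminf (fun n => (((F n).filter (· ∈ A)).card : ℝ) / ((F n).card : ℝ)) atTop = 0)
    (hupp : 0 < limsup (fun n => (((F n).filter (· ∈ A)).card : ℝ) / ((F n).card : ℝ)) atTop) :
    ∃ A' : Set G, A' ⊆ A ∧
      Tendsto (fun n => (((F n).filter (· ∈ A')).card : ℝ) / ((F n).card : ℝ)) atTop (nhds 0) ∧
      2 / 3 ≤ limsup
        (fun n => (((F n).filter (· ∈ A')).card : ℝ) / (((F n).filter (· ∈ A)).card : ℝ))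
        atTop := by
  classical
  obtain ⟨a, ha⟩ : ∃ a : ℕ → ℝ, ∀ n, a n = (((F n).filter (· ∈ A)).card : ℝ) :=
    ⟨_, fun _ => rfl⟩
  obtain ⟨b, hb⟩ : ∃ b : ℕ → ℝ, ∀ n, b n = ((F n).card : ℝ) := ⟨_, fun _ => rfl⟩
  have hFmono : Monotone F := monotone_nat_of_le_succ hnested
  have hbpos : ∀ n, 0 < b n := by
    intro n; rw [hb]; exact_mod_cast (hFol.1 n).card_pos
  have hanonneg : ∀ n, 0 ≤ a n := by intro n; rw [ha]; positivity
  have hab : ∀ n, a n ≤ b n := by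
    intro n; rw [ha, hb]
    exact_mod_cast Finset.card_le_card (Finset.filter_subset _ _)
  have hamono : Monotone a := by
    intro p q hpq; rw [ha, ha]
    exact_mod_cast Finset.card_le_card (Finset.filter_subset_filter _ (hFmono hpq))
  have hbmono : Monotone b := by
    intro p q hpq; rw [hb, hb]; exact_mod_cast Finset.card_le_card (hFmono hpq)
  have hbtop : Tendsto b atTop atTop := by
    have h1 : Tendsto (fun n => ((F n).card : ℝ)) atTop atTop :=
      tendsto_natCast_atTop_atTop.comp
        (tendsto_atTop_mono (fun n => Finset.card_le_card (Finset.filter_subset _ _)) hcard)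
    exact h1.congr fun n => (hb n).symm
  have hdle1 : ∀ n, a n / b n ≤ 1 := fun n => (div_le_one (hbpos n)).mpr (hab n)
  have hdnonneg : ∀ n, 0 ≤ a n / b n := fun n => div_nonneg (hanonneg n) (hbpos n).le
  have hlow' : atTop.liminf (fun n => a n / b n) = 0 := by
    simp only [ha, hb]; exact hlow
  have hupp' : 0 < atTop.limsup (fun n => a n / b n) := by
    simp only [ha, hb]; exact hupp
  set L := atTop.limsup (fun n => a n / b n) with hL
  obtain ⟨δ, hδ⟩ : ∃ δ : ℕ → ℝ, ∀ k, δ k = min L 1 / (k + 2) := ⟨_, fun _ => rfl⟩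
  have hδpos : ∀ k, 0 < δ k := by
    intro k; rw [hδ]; exact div_pos (lt_min hupp' one_pos) (by positivity)
  have hδ1 : ∀ k, δ k ≤ 1 := by
    intro k; rw [hδ]
    calc min L 1 / (k + 2 : ℝ) ≤ 1 / (k + 2 : ℝ) := by
          gcongr
          exact min_le_right _ _
      _ ≤ 1 := by
          rw [div_le_one (by positivity)]
          have : (0:ℝ) ≤ (k:ℝ) := Nat.cast_nonneg k
          linarith
  have hδL : ∀ k, δ k < L := by
    intro k; rw [hδ]
    calc min L 1 / (k + 2 : ℝ) ≤ L / (k + 2 : ℝ) := by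
          gcongr
          exact min_le_left _ _
      _ < L := by
          apply div_lt_self hupp'
          have : (0:ℝ) ≤ (k:ℝ) := Nat.cast_nonneg k
          linarith
  have hδanti : Antitone δ := by
    intro p q hpq; rw [hδ, hδ]
    have h1 : ((p:ℝ) + 2) ≤ ((q:ℝ) + 2) := by
      have : (p:ℝ) ≤ q := Nat.cast_le.mpr hpq
      linarith
    exact div_le_div_of_nonneg_left (lt_min hupp' one_pos).le (by positivity) h1
  have hfreq_lo : ∀ c : ℝ, 0 < c → ∃ᶠ n in atTop, a n / b n < c := by
    intro c hc
    have hbd : IsBoundedUnder (· ≤ ·) atTop (fun n => a n / b n) :=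
      isBoundedUnder_of ⟨1, fun n => hdle1 n⟩
    apply frequently_lt_of_liminf_lt hbd.isCoboundedUnder_ge
    rw [hlow']; exact hc
  have hfreq_hi : ∀ k, ∃ᶠ n in atTop, δ k < a n / b n := by
    intro k
    have hbd : IsBoundedUnder (· ≥ ·) atTop (fun n => a n / b n) :=
      isBoundedUnder_of ⟨0, fun n => hdnonneg n⟩
    exact frequently_lt_of_lt_limsup hbd.isCoboundedUnder_le (hδL k)
  have hover : ∀ k, ∀ᶠ nv in atTop, b (nv + 1) ≤ (1 + δ k) * b nv := by
    intro k
    have h1 : Tendsto (fun nv => b (nv + 1) / b nv) atTop (nhds 1) := by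
      refine hratio.congr fun nv => ?_
      rw [hb, hb]
    have h2 := h1.eventually_lt_const (show (1:ℝ) < 1 + δ k by linarith [hδpos k])
    filter_upwards [h2] with nv hnv
    exact ((div_lt_iff₀ (hbpos nv)).mp hnv).le
  -- key recursive step
  have key : ∀ k P : ℕ, ∃ q : ℕ × ℕ,
      P < q.1 ∧ q.1 < q.2 ∧
      a q.1 < δ k / (k + 2) * b q.1 ∧
      (∀ i, q.1 ≤ i → i < q.2 → a i ≤ δ k * b i) ∧
      δ k * b q.2 < a q.2 ∧
      (∀ j, q.1 ≤ j → b (j + 1) ≤ (1 + δ k) * b j) ∧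
      2 * b P ≤ δ k * b q.1 := by
    intro k P
    obtain ⟨N1, hN1⟩ := eventually_atTop.mp (hover k)
    obtain ⟨N2, hN2⟩ := eventually_atTop.mp (hbtop.eventually_ge_atTop (2 * b P / δ k))
    have hεpos : 0 < δ k / (k + 2) := div_pos (hδpos k) (by positivity)
    obtain ⟨mv, hmvlt, hmvge⟩ :=
      ((hfreq_lo _ hεpos).and_eventually (eventually_ge_atTop (max (max N1 N2) (P + 1)))).exists
    have hQ : ∃ nv, mv < nv ∧ δ k * b nv < a nv := by
      obtain ⟨n0, hn0, hn0gt⟩ :=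
        ((hfreq_hi k).and_eventually (eventually_gt_atTop mv)).exists
      exact ⟨n0, hn0gt, (lt_div_iff₀ (hbpos n0)).mp hn0⟩
    have hN1mv : N1 ≤ mv := le_trans (le_trans (le_max_left _ _) (le_max_left _ _)) hmvge
    have hN2mv : N2 ≤ mv := le_trans (le_trans (le_max_right _ _) (le_max_left _ _)) hmvge
    have hPmv : P < mv := lt_of_lt_of_le (Nat.lt_succ_self P) (le_trans (le_max_right _ _) hmvge)
    have hεδ : δ k / (k + 2) ≤ δ k := by
      apply div_le_self (hδpos k).le
      have : (0:ℝ) ≤ (k:ℝ) := Nat.cast_nonneg k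
      linarith
    have hIval : ∀ i, mv ≤ i → i < Nat.find hQ → a i ≤ δ k * b i := by
      intro i hi1 hi2
      rcases eq_or_lt_of_le hi1 with heq | hlt
      · rw [← heq]
        exact le_of_lt (lt_of_lt_of_le ((div_lt_iff₀ (hbpos mv)).mp hmvlt)
          (mul_le_mul_of_nonneg_right hεδ (hbpos mv).le))
      · have hnot := Nat.find_min hQ hi2
        push_neg at hnot
        exact hnot hlt
    have hRat : ∀ j, mv ≤ j → b (j + 1) ≤ (1 + δ k) * b j := fun j hj =>
      hN1 j (le_trans hN1mv hj)
    have hGrow : 2 * b P ≤ δ k * b mv := by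
      have := hN2 mv hN2mv
      rw [div_le_iff₀ (hδpos k)] at this
      linarith
    exact ⟨(mv, Nat.find hQ), hPmv, (Nat.find_spec hQ).1,
      (div_lt_iff₀ (hbpos mv)).mp hmvlt, hIval, (Nat.find_spec hQ).2, hRat, hGrow⟩
  choose pick h1 h2 h3 h4 h5 h6 h7 using key
  obtain ⟨s, hs0, hsS⟩ : ∃ s : ℕ → ℕ × ℕ, s 0 = pick 0 0 ∧ ∀ k, s (k + 1) = pick (k + 1) (s k).2 :=
    ⟨fun k => Nat.rec (pick 0 0) (fun j ih => pick (j + 1) ih.2) k, rfl, fun _ => rfl⟩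
  have hsP : ∀ k, ∃ P, s k = pick k P := by
    intro k
    cases k with
    | zero => exact ⟨0, hs0⟩
    | succ j => exact ⟨(s j).2, hsS j⟩
  have hMN : ∀ k, (s k).1 < (s k).2 := by
    intro k; obtain ⟨P, hP⟩ := hsP k; rw [hP]; exact h2 k P
  have hlo : ∀ k, a ((s k).1) < δ k / (k + 2) * b ((s k).1) := by
    intro k; obtain ⟨P, hP⟩ := hsP k; rw [hP]; exact h3 k P
  have hint : ∀ k i, (s k).1 ≤ i → i < (s k).2 → a i ≤ δ k * b i := by
    intro k; obtain ⟨P, hP⟩ := hsP k; rw [hP]; exact h4 k P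
  have hhi : ∀ k, δ k * b ((s k).2) < a ((s k).2) := by
    intro k; obtain ⟨P, hP⟩ := hsP k; rw [hP]; exact h5 k P
  have hrat : ∀ k j, (s k).1 ≤ j → b (j + 1) ≤ (1 + δ k) * b j := by
    intro k; obtain ⟨P, hP⟩ := hsP k; rw [hP]; exact h6 k P
  have hchain : ∀ k, (s k).2 < (s (k + 1)).1 := by
    intro k; rw [hsS]; exact h1 (k + 1) _
  have hgrow : ∀ k, 2 * b ((s k).2) ≤ δ (k + 1) * b ((s (k + 1)).1) := by
    intro k; rw [hsS]; exact h7 (k + 1) _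
  have hM : StrictMono fun k => (s k).1 :=
    strictMono_nat_of_lt_succ fun k => (hMN k).trans (hchain k)
  have hkleM : ∀ k, k ≤ (s k).1 := fun k => hM.le_apply
  have hkleN : ∀ k, k ≤ (s k).2 := fun k => le_trans (hkleM k) (hMN k).le
  have hS : ∀ k, ∑ j ∈ Finset.range k, b ((s j).2) ≤ δ k * b ((s k).1) := by
    intro k
    induction k with
    | zero =>
      simp only [Finset.range_zero, Finset.sum_empty]
      exact mul_nonneg (hδpos 0).le (hbpos _).le
    | succ k ih =>
      rw [Finset.sum_range_succ]
      have e1 : δ k * b ((s k).1) ≤ δ k * b ((s k).2) :=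
        mul_le_mul_of_nonneg_left (hbmono (hMN k).le) (hδpos k).le
      have e2 : δ k * b ((s k).2) ≤ 1 * b ((s k).2) :=
        mul_le_mul_of_nonneg_right (hδ1 k) (hbpos _).le
      have e3 := hgrow k
      linarith
  have hover2 : ∀ k, a ((s k).2) ≤ 2 * δ k * b ((s k).2) := by
    intro k
    obtain ⟨p, hp⟩ : ∃ p, (s k).2 = p + 1 := ⟨(s k).2 - 1, by have := hMN k; omega⟩
    have hmp : (s k).1 ≤ p := by have := hMN k; omega
    have hap : a p ≤ δ k * b p := hint k p hmp (by omega)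
    have hbp : b (p + 1) ≤ (1 + δ k) * b p := hrat k p hmp
    have hcardsub : a (p + 1) ≤ a p + (b (p + 1) - b p) := by
      rw [ha, ha, hb, hb]
      have hsub : F p ⊆ F (p + 1) := hnested p
      have hu : (F (p + 1)).filter (· ∈ A) ⊆ ((F p).filter (· ∈ A)) ∪ (F (p + 1) \ F p) := by
        intro g hg
        rw [Finset.mem_filter] at hg
        by_cases hgp : g ∈ F p
        · exact Finset.mem_union_left _ (Finset.mem_filter.mpr ⟨hgp, hg.2⟩)
        · exact Finset.mem_union_right _ (Finset.mem_sdiff.mpr ⟨hg.1, hgp⟩)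
      have h2' := (Finset.card_le_card hu).trans (Finset.card_union_le _ _)
      rw [Finset.card_sdiff_of_subset hsub] at h2'
      have h3' : (F p).card ≤ (F (p + 1)).card := Finset.card_le_card hsub
      have h5' : ((F (p + 1)).filter (· ∈ A)).card + (F p).card ≤
          ((F p).filter (· ∈ A)).card + (F (p + 1)).card := by omega
      have h6' : ((((F (p + 1)).filter (· ∈ A)).card : ℝ) + ((F p).card : ℝ)) ≤
          ((((F p).filter (· ∈ A)).card : ℝ) + ((F (p + 1)).card : ℝ)) := by
        exact_mod_cast h5'
      linarith
    have hb2 : b (p + 1) - b p ≤ δ k * b (p + 1) := by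
      have hmono := hbmono (Nat.le_succ p)
      have : δ k * b p ≤ δ k * b (p + 1) := mul_le_mul_of_nonneg_left hmono (hδpos k).le
      linarith
    have hbple : δ k * b p ≤ δ k * b (p + 1) :=
      mul_le_mul_of_nonneg_left (hbmono (Nat.le_succ p)) (hδpos k).le
    rw [hp]
    linarith
  obtain ⟨A', hA'⟩ : ∃ A' : Set G,
      A' = {g | g ∈ A ∧ ∃ k, g ∈ F ((s k).2) ∧ g ∉ F ((s k).1)} := ⟨_, rfl⟩
  have hA'mem : ∀ g, g ∈ A' ↔ g ∈ A ∧ ∃ k, g ∈ F ((s k).2) ∧ g ∉ F ((s k).1) := by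
    intro g; rw [hA']; exact Iff.rfl
  refine ⟨A', fun g hg => ((hA'mem g).mp hg).1, ?_, ?_⟩
  · -- density zero
    have hcount : ∀ k nv, (s k).1 ≤ nv → nv < (s (k + 1)).1 →
        (((F nv).filter (· ∈ A')).card : ℝ) ≤ 3 * δ k * b nv := by
      intro k nv hnv1 hnv2
      have hsubset : (F nv).filter (· ∈ A') ⊆
          ((F (min nv ((s k).2))).filter (· ∈ A)) ∪
            (Finset.range k).biUnion (fun j => (F ((s j).2)).filter (· ∈ A)) := by
        intro g hg
        rw [Finset.mem_filter] at hg
        obtain ⟨hgF, hgA'⟩ := hg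
        obtain ⟨hgA, j, hgj1, hgj2⟩ := (hA'mem g).mp hgA'
        rcases lt_trichotomy j k with hjk | hjk | hjk
        · exact Finset.mem_union_right _ (Finset.mem_biUnion.mpr
            ⟨j, Finset.mem_range.mpr hjk, Finset.mem_filter.mpr ⟨hgj1, hgA⟩⟩)
        · subst hjk
          refine Finset.mem_union_left _ (Finset.mem_filter.mpr ⟨?_, hgA⟩)
          rcases min_cases nv ((s j).2) with ⟨h, _⟩ | ⟨h, _⟩ <;> rw [h]
          · exact hgF
          · exact hgj1
        · exfalso
          apply hgj2
          apply hFmono (le_trans hnv2.le (hM.monotone hjk)) hgF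
      have hc1 := Finset.card_le_card hsubset
      have hc2 := Finset.card_union_le ((F (min nv ((s k).2))).filter (· ∈ A))
        ((Finset.range k).biUnion fun j => (F ((s j).2)).filter (· ∈ A))
      have hc3 : ((Finset.range k).biUnion fun j => (F ((s j).2)).filter (· ∈ A)).card ≤
          ∑ j ∈ Finset.range k, ((F ((s j).2)).filter (· ∈ A)).card :=
        Finset.card_biUnion_le
      have hc4 : (((F nv).filter (· ∈ A')).card : ℝ) ≤
          a (min nv ((s k).2)) + ∑ j ∈ Finset.range k, a ((s j).2) := by
        have hn : ((F nv).filter (· ∈ A')).card ≤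
            ((F (min nv ((s k).2))).filter (· ∈ A)).card +
              ∑ j ∈ Finset.range k, ((F ((s j).2)).filter (· ∈ A)).card := by
          omega
        calc (((F nv).filter (· ∈ A')).card : ℝ)
            ≤ ((((F (min nv ((s k).2))).filter (· ∈ A)).card +
                ∑ j ∈ Finset.range k, ((F ((s j).2)).filter (· ∈ A)).card : ℕ) : ℝ) := by
              exact_mod_cast hn
          _ = a (min nv ((s k).2)) + ∑ j ∈ Finset.range k, a ((s j).2) := by
              push_cast
              simp only [← ha]
      have hsum2 : ∑ j ∈ Finset.range k, a ((s j).2) ≤ δ k * b ((s k).1) :=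
        le_trans (Finset.sum_le_sum fun j _ => hab _) (hS k)
      have hmin : a (min nv ((s k).2)) ≤ 2 * δ k * b nv := by
        rcases le_total ((s k).2) nv with h | h
        · rw [min_eq_right h]
          calc a ((s k).2) ≤ 2 * δ k * b ((s k).2) := hover2 k
            _ ≤ 2 * δ k * b nv :=
              mul_le_mul_of_nonneg_left (hbmono h) (by linarith [hδpos k])
        · rw [min_eq_left h]
          rcases eq_or_lt_of_le h with heq | hlt
          · rw [heq]; exact hover2 k
          · have := hint k nv hnv1 hlt
            have hnn : 0 ≤ δ k * b nv := mul_nonneg (hδpos k).le (hbpos nv).le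
            linarith
      have hmk : δ k * b ((s k).1) ≤ δ k * b nv :=
        mul_le_mul_of_nonneg_left (hbmono hnv1) (hδpos k).le
      linarith
    rw [Metric.tendsto_atTop]
    intro ε hε
    obtain ⟨K, hK⟩ : ∃ K, 3 * δ K < ε := by
      obtain ⟨K, hKgt⟩ := exists_nat_gt (3 / ε)
      refine ⟨K, ?_⟩
      have hδK : δ K ≤ 1 / (K + 2) := by
        rw [hδ]
        gcongr
        exact min_le_right _ _
      have h2 : 3 / ε < (K:ℝ) + 2 := by linarith
      have h3 : 3 < ε * ((K:ℝ) + 2) := by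
        rw [div_lt_iff₀ hε] at h2
        linarith
      have h4 : 3 * (1 / ((K:ℝ) + 2)) < ε := by
        rw [mul_one_div, div_lt_iff₀ (by positivity : (0:ℝ) < (K:ℝ) + 2)]
        linarith
      have h5 : 3 * δ K ≤ 3 * (1 / ((K:ℝ) + 2)) := by linarith
      linarith
    refine ⟨(s (K + 1)).1, fun nv hnv => ?_⟩
    have hnv' : (s (K + 1)).1 ≤ nv := hnv
    have hk1 : K + 1 ≤ Nat.findGreatest (fun j => (s j).1 ≤ nv) nv :=
      Nat.le_findGreatest (P := fun j => (s j).1 ≤ nv) (m := K + 1)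
        (le_trans (hkleM (K + 1)) hnv') hnv'
    have hk2 : (s (Nat.findGreatest (fun j => (s j).1 ≤ nv) nv)).1 ≤ nv :=
      Nat.findGreatest_spec (P := fun j => (s j).1 ≤ nv) (m := K + 1)
        (le_trans (hkleM (K + 1)) hnv') hnv'
    have hk3 : nv < (s (Nat.findGreatest (fun j => (s j).1 ≤ nv) nv + 1)).1 := by
      by_contra hcon
      push_neg at hcon
      have hcontra : Nat.findGreatest (fun j => (s j).1 ≤ nv) nv + 1 ≤
          Nat.findGreatest (fun j => (s j).1 ≤ nv) nv :=
        Nat.le_findGreatest (P := fun j => (s j).1 ≤ nv)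
          (le_trans (hkleM _) hcon) hcon
      omega
    have hb3 := hcount _ nv hk2 hk3
    have hδk : δ (Nat.findGreatest (fun j => (s j).1 ≤ nv) nv) ≤ δ K := hδanti (by omega)
    have hpos : 0 ≤ (((F nv).filter (· ∈ A')).card : ℝ) / ((F nv).card : ℝ) := by positivity
    have hgoal : (((F nv).filter (· ∈ A')).card : ℝ) / ((F nv).card : ℝ) < ε := by
      rw [div_lt_iff₀ (show (0:ℝ) < ((F nv).card : ℝ) by rw [← hb]; exact hbpos nv)]
      have hbnv : ((F nv).card : ℝ) = b nv := (hb nv).symm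
      rw [hbnv]
      have e1 : 3 * δ (Nat.findGreatest (fun j => (s j).1 ≤ nv) nv) * b nv ≤ 3 * δ K * b nv := by
        have := hbpos nv
        nlinarith
      have e2 : 3 * δ K * b nv < ε * b nv := by
        have := hbpos nv
        nlinarith
      linarith
    have habs : dist ((((F nv).filter (· ∈ A')).card : ℝ) / ((F nv).card : ℝ)) 0 < ε := by
      rw [Real.dist_eq, sub_zero, abs_of_nonneg hpos]
      exact hgoal
    exact habs
  · -- limsup ≥ 2/3
    have hbdd : IsBoundedUnder (· ≤ ·) atTop
        (fun nv => (((F nv).filter (· ∈ A')).card : ℝ) / (((F nv).filter (· ∈ A)).card : ℝ)) := by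
      refine isBoundedUnder_of ⟨1, fun nv => ?_⟩
      apply div_le_one_of_le₀
      · exact_mod_cast Finset.card_le_card
          (Finset.monotone_filter_right _ (fun g _ hg => ((hA'mem g).mp hg).1))
      · positivity
    refine le_limsup_of_frequently_le ?_ hbdd
    rw [frequently_atTop]
    intro N
    refine ⟨(s (max N 1)).2, le_trans (le_max_left N 1) (hkleN _), ?_⟩
    set k := max N 1 with hk
    have hk1 : 1 ≤ k := le_max_right N 1
    have hsd : ((F ((s k).2)).filter (· ∈ A)) \ ((F ((s k).1)).filter (· ∈ A)) ⊆
        (F ((s k).2)).filter (· ∈ A') := by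
      intro g hg
      rw [Finset.mem_sdiff, Finset.mem_filter, Finset.mem_filter] at hg
      obtain ⟨⟨hg1, hg2⟩, hg3⟩ := hg
      refine Finset.mem_filter.mpr ⟨hg1, ?_⟩
      exact (hA'mem g).mpr ⟨hg2, k, hg1, fun hmem => hg3 ⟨hmem, hg2⟩⟩
    have h2sub : ((F ((s k).1)).filter (· ∈ A)) ⊆ ((F ((s k).2)).filter (· ∈ A)) :=
      Finset.filter_subset_filter _ (hFmono (hMN k).le)
    have hcard2 : a ((s k).2) - a ((s k).1) ≤ (((F ((s k).2)).filter (· ∈ A')).card : ℝ) := by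
      have hc1 := Finset.card_le_card hsd
      rw [Finset.card_sdiff_of_subset h2sub] at hc1
      have h3' := Finset.card_le_card h2sub
      rw [ha, ha]
      have : ((((F ((s k).2)).filter (· ∈ A)).card - ((F ((s k).1)).filter (· ∈ A)).card : ℕ) : ℝ)
          ≤ (((F ((s k).2)).filter (· ∈ A')).card : ℝ) := by exact_mod_cast hc1
      rw [Nat.cast_sub h3'] at this
      exact this
    have hNpos : 0 < a ((s k).2) :=
      lt_of_le_of_lt (mul_nonneg (hδpos k).le (hbpos _).le) (hhi k)
    have hms : a ((s k).1) ≤ a ((s k).2) / (k + 2) := by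
      have e1 : a ((s k).1) < δ k / (k + 2) * b ((s k).1) := hlo k
      have e2 : b ((s k).1) ≤ b ((s k).2) := hbmono (hMN k).le
      have e3 : δ k * b ((s k).2) < a ((s k).2) := hhi k
      have e4 : δ k / (k + 2) * b ((s k).1) ≤ δ k * b ((s k).2) / ((k:ℝ) + 2) := by
        rw [div_mul_eq_mul_div]
        gcongr
        exact (hδpos k).le
      have e5 : δ k * b ((s k).2) / ((k:ℝ) + 2) ≤ a ((s k).2) / ((k:ℝ) + 2) := by gcongr
      linarith
    have hden : (((F ((s k).2)).filter (· ∈ A)).card : ℝ) = a ((s k).2) := (ha _).symm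
    rw [hden, le_div_iff₀ hNpos]
    have hk3 : (3:ℝ) ≤ (k:ℝ) + 2 := by
      have : (1:ℝ) ≤ (k:ℝ) := by exact_mod_cast hk1
      linarith
    have h6 : a ((s k).2) / ((k:ℝ) + 2) ≤ a ((s k).2) / 3 :=
      div_le_div_of_nonneg_left hNpos.le (by norm_num) hk3
    linarith
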